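/- arXiv:math/0601567 — 9 statements merged into one kernel-verified Lean document; each statement's English description precedes it below -/
import Mathlib

section
/- Let R be a commutative ring and x an element of the Jacobson radical of R. Then the localization map R → R_x is surjective (equivalently, the first Čech cohomology H^1_x(R) = R_x/R vanishes) if and only if x is nilpotent. -/
/-- If `x` lies in the Jacobson radical of a commutative ring `R`, then the localization map
`R → R_x` is surjective (equivalently, `H^1_x(R) = R_x/R` vanishes) iff `x` is nilpotent. -/
theorem stmt_0 {R : Type*} [CommRing R] (x : R) (hx : x ∈ (⊥ : Ideal R).jacobson) :
    Function.Surjective (algebraMap R (Localization.Away x)) ↔ IsNilpotent x := by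
  rw [Ideal.mem_jacobson_bot] at hx
  constructor
  · intro hsurj
    -- get a preimage of 1/x
    obtain ⟨r, hr⟩ := hsurj (IsLocalization.mk' (Localization.Away x) 1
      (⟨x, Submonoid.mem_powers x⟩ : Submonoid.powers x))
    have h1 : algebraMap R (Localization.Away x) (r * x) = algebraMap R (Localization.Away x) 1 := by
      rw [map_mul, hr, map_one, mul_comm]
      rw [IsLocalization.mk'_spec' (Localization.Away x) 1
        (⟨x, Submonoid.mem_powers x⟩ : Submonoid.powers x)]
      simp
    obtain ⟨⟨c, hc⟩, hcc⟩ := (IsLocalization.eq_iff_exists (Submonoid.powers x)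
      (Localization.Away x)).mp h1
    obtain ⟨n, rfl⟩ := hc
    -- x^n * (r * x) = x^n * 1
    have hunit : IsUnit (x * (-r) + 1) := hx (-r)
    refine ⟨n, ?_⟩
    have : x ^ n * (x * (-r) + 1) = 0 := by ring_nf; linear_combination -hcc
    obtain ⟨u, hu⟩ := hunit
    calc x ^ n = x ^ n * (x * (-r) + 1) * ↑u⁻¹ := by
          rw [← hu, Units.mul_inv_cancel_right]
      _ = 0 := by rw [this, zero_mul]
  · rintro ⟨n, hn⟩
    have h0 : (algebraMap R (Localization.Away x)) x ^ n = 0 := by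
      rw [← map_pow, hn, map_zero]
    have hu : IsUnit ((algebraMap R (Localization.Away x)) x) :=
      IsLocalization.map_units (Localization.Away x)
        (⟨x, Submonoid.mem_powers x⟩ : Submonoid.powers x)
    have : IsUnit ((0 : Localization.Away x)) := by
      rw [← h0]; exact hu.pow n
    have hsub : Subsingleton (Localization.Away x) :=
      subsingleton_of_zero_eq_one (isUnit_zero_iff.mp this)
    intro y
    exact ⟨0, Subsingleton.elim _ _⟩
end

section
/- Let R be a commutative ring, I = (x_1, ..., x_ℓ)R a finitely generated ideal, and M an R-module. Then the annihilator (0 :_M I) is zero if and only if the element f = x_1 + x_2 t + ... + x_ℓ t^{ℓ-1} of the polynomial ring R[t] is a non-zero-divisor on R[t] ⊗_R M. -/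
open scoped BigOperators

open Polynomial

private lemma pm_sum_apply {R : Type*} [CommRing R] {M : Type*} [AddCommGroup M] [Module R M]
    {ι : Type*} (s : Finset ι) (g : ι → PolynomialModule R M) (k : ℕ) :
    (∑ i ∈ s, g i).coeff k = ∑ i ∈ s, (g i).coeff k := by
  classical
  induction s using Finset.cons_induction with
  | empty => simp
  | cons a s ha ih =>
    rw [Finset.sum_cons, Finset.sum_cons, PolynomialModule.coeff_add, Finsupp.add_apply, ih]

private lemma pm_ext {R : Type*} [CommRing R] {M : Type*} [AddCommGroup M] [Module R M]
    (q : PolynomialModule R M) (h : ∀ k, q.coeff k = 0) : q = 0 :=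
  PolynomialModule.coeff_injective (Finsupp.ext fun k => by rw [h k]; rfl)

/-- Hochster's lemma: for a finitely generated ideal `I = (x_1, ..., x_ℓ)` of `R` and an
`R`-module `M`, the annihilator `(0 :_M I)` is zero iff
`f = x_1 + x_2 t + ... + x_ℓ t^{ℓ-1} ∈ R[t]` is a non-zero-divisor on `R[t] ⊗_R M`
(identified with the module of polynomials with coefficients in `M`). -/
theorem stmt_2 {R : Type*} [CommRing R] {M : Type*} [AddCommGroup M] [Module R M]
    {ℓ : ℕ} (x : Fin ℓ → R) :
    (∀ m : M, (∀ r ∈ Ideal.span (Set.range x), r • m = 0) → m = 0) ↔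
      (∀ p : PolynomialModule R M,
        (∑ i : Fin ℓ, Polynomial.monomial (i : ℕ) (x i)) • p = 0 → p = 0) := by
  classical
  set f : R[X] := ∑ i : Fin ℓ, Polynomial.monomial (i : ℕ) (x i) with hf
  constructor
  · intro hann p hp
    -- pointwise version of the annihilator hypothesis
    have hann' : ∀ m : M, (∀ i : Fin ℓ, x i • m = 0) → m = 0 := by
      intro m hm
      refine hann m fun r hr => ?_
      induction hr using Submodule.span_induction with
      | mem r hr => obtain ⟨i, rfl⟩ := hr; exact hm i
      | zero => simp
      | add a b _ _ ha hb => rw [add_smul, ha, hb, add_zero]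
      | smul r a _ ha => rw [smul_eq_mul, mul_smul, ha, smul_zero]
    suffices H : ∀ n : ℕ, ∀ q : PolynomialModule R M,
        (∀ k, n ≤ k → q.coeff k = 0) → f • q = 0 → q = 0 by
      refine H (p.coeff.support.sup id + 1) p (fun k hk => ?_) hp
      rw [← Finsupp.notMem_support_iff]
      intro hmem
      have := Finset.le_sup (f := id) hmem
      simp only [id] at this
      omega
    intro n
    induction n with
    | zero => intro q hq _; exact pm_ext q fun k => hq k (Nat.zero_le k)
    | succ n IH =>
      intro q hq hfq
      have claim : ∀ s : ℕ, ∀ i : Fin ℓ, ℓ - s ≤ (i : ℕ) → ∀ k, x i • q.coeff k = 0 := by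
        intro s
        induction s with
        | zero => intro i hi; exact absurd hi (by omega)
        | succ s ihs =>
          intro i hi
          by_cases hcase : ℓ - s ≤ (i : ℕ)
          · exact ihs i hcase
          have hieq : ¬ (ℓ - s ≤ (i : ℕ)) := hcase
          -- top coefficient is killed by x i
          have htop : x i • q.coeff n = 0 := by
            have h1 : (f • q).coeff (n + (i : ℕ)) = 0 := by
              rw [hfq, PolynomialModule.coeff_zero, Finsupp.coe_zero, Pi.zero_apply]
            rw [hf, Finset.sum_smul, pm_sum_apply] at h1
            have h2 : ∀ j : Fin ℓ,
                (Polynomial.monomial (j : ℕ) (x j) • q).coeff (n + (i : ℕ)) =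
                  if (j : ℕ) ≤ n + (i : ℕ) then x j • q.coeff (n + (i : ℕ) - (j : ℕ)) else 0 :=
              fun j => PolynomialModule.monomial_smul_apply _ _ _ _
            rw [Finset.sum_congr rfl fun j _ => h2 j] at h1
            rw [Finset.sum_eq_single i ?_ (by simp)] at h1
            · simpa using h1
            · intro j _ hji
              rcases lt_or_gt_of_ne (fun h : (j : ℕ) = (i : ℕ) => hji (Fin.ext h)) with hlt | hgt
              · -- j < i : coefficient of q beyond degree n vanishes
                rw [if_pos (by omega), hq _ (by omega), smul_zero]
              · -- j > i : x j kills q by the inner induction hypothesis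
                split_ifs with hle
                · rw [ihs j (by omega)]
                · rfl
          -- multiply q by x i and use the outer induction hypothesis
          have hq' : (Polynomial.monomial 0 (x i) : R[X]) • q = 0 := by
            refine IH ((Polynomial.monomial 0 (x i) : R[X]) • q) (fun k hk => ?_) ?_
            · rw [PolynomialModule.monomial_smul_apply, if_pos (Nat.zero_le k), Nat.sub_zero]
              rcases Nat.lt_or_ge n k with hnk | hnk
              · rw [hq k (by omega), smul_zero]
              · have : k = n := by omega
                rw [this, htop]
            · rw [← mul_smul, mul_comm, mul_smul, hfq, smul_zero]
          intro k
          have h3 := PolynomialModule.monomial_smul_apply 0 (x i) q k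
          rw [hq', PolynomialModule.coeff_zero, Finsupp.coe_zero, Pi.zero_apply, if_pos (Nat.zero_le k), Nat.sub_zero] at h3
          exact h3.symm
      refine pm_ext q fun k => hann' (q.coeff k) fun i => claim ℓ i (by omega) k
  · intro h m hm
    have hp : f • (PolynomialModule.single R 0 m) = 0 := by
      rw [hf, Finset.sum_smul]
      refine Finset.sum_eq_zero fun i _ => ?_
      rw [PolynomialModule.monomial_smul_single, hm (x i)
        (Ideal.subset_span ⟨i, rfl⟩), PolynomialModule.single_zero]
    have := h _ hp
    have h0 : (PolynomialModule.single R 0 m).coeff 0 = m := by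
      rw [PolynomialModule.coeff_single, Finsupp.single_apply, if_pos rfl]
    rw [this, PolynomialModule.coeff_zero, Finsupp.coe_zero, Pi.zero_apply] at h0
    exact h0.symm
end

section
/- Let R be a commutative ring, M an R-module, x a sequence of elements of R generating an ideal I, and u ∈ I a non-zero-divisor on M. If for some i the multiplication-by-u map on the Čech cohomology H^i_x(M) is injective, then H^i_x(M) = 0. -/
/-- The natural map between localizations of a module at powers of two elements
`a ∣ b`, sending `m/1` to `m/1`. -/

noncomputable def cechLoc {R : Type*} [CommRing R] {M : Type*} [AddCommGroup M] [Module R M]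
    (a b : R) (hab : a ∣ b) :
    LocalizedModule (Submonoid.powers a) M →ₗ[R] LocalizedModule (Submonoid.powers b) M :=
  LocalizedModule.lift _ (LocalizedModule.mkLinearMap (Submonoid.powers b) M) (by
    rintro ⟨s, n, rfl⟩
    obtain ⟨c, rfl⟩ := hab
    set f := algebraMap R (Module.End R (LocalizedModule (Submonoid.powers (a * c)) M)) with hf
    obtain ⟨u, hu⟩ := IsLocalizedModule.map_units
      (LocalizedModule.mkLinearMap (Submonoid.powers (a * c)) M)
      (⟨(a * c) ^ n, n, rfl⟩ : Submonoid.powers (a * c))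
    have hcomm : Commute (f (a ^ n)) ↑u := by
      have : Commute (f (a ^ n)) (f ((a * c) ^ n)) := by
        simp only [Commute, SemiconjBy, ← map_mul, mul_comm]
      rwa [← hu] at this
    refine ⟨⟨f (a ^ n), f (c ^ n) * ↑u⁻¹, ?_, ?_⟩, rfl⟩
    · rw [← mul_assoc, ← map_mul, ← mul_pow, ← hu]
      exact u.mul_inv
    · rw [mul_assoc, ← (hcomm.units_inv_right).eq, ← mul_assoc, ← map_mul]
      have : c ^ n * a ^ n = (a * c) ^ n := by ring
      rw [this, ← hu]
      exact u.mul_inv)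

section CechAux

variable {R : Type*} [CommRing R] {M : Type*} [AddCommGroup M] [Module R M]

theorem cechLoc_comp_mk (a b : R) (hab : a ∣ b) :
    (cechLoc a b hab (M := M)).comp (LocalizedModule.mkLinearMap (Submonoid.powers a) M)
      = LocalizedModule.mkLinearMap (Submonoid.powers b) M :=
  LocalizedModule.lift_comp _ _ _

theorem cechLoc_mk_one (a b : R) (hab : a ∣ b) (m : M) :
    cechLoc a b hab (LocalizedModule.mk m 1) = LocalizedModule.mk m 1 := by
  have := congrArg (fun f => f m) (cechLoc_comp_mk (M := M) a b hab)
  simpa [LocalizedModule.mkLinearMap_apply] using this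

theorem isUnit_end_of_dvd (a b : R) (hab : a ∣ b) :
    IsUnit (algebraMap R (Module.End R (LocalizedModule (Submonoid.powers b) M)) a) := by
  obtain ⟨c, rfl⟩ := hab
  set f := algebraMap R (Module.End R (LocalizedModule (Submonoid.powers (a * c)) M)) with hf
  obtain ⟨u, hu⟩ := IsLocalizedModule.map_units
    (LocalizedModule.mkLinearMap (Submonoid.powers (a * c)) M)
    (⟨a * c, Submonoid.mem_powers _⟩ : Submonoid.powers (a * c))
  have hcomm : Commute (f a) ↑u := by
    have : Commute (f a) (f (a * c)) := by
      simp only [Commute, SemiconjBy, ← map_mul, mul_comm]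
    rwa [← hu] at this
  refine ⟨⟨f a, f c * ↑u⁻¹, ?_, ?_⟩, rfl⟩
  · rw [← mul_assoc, ← map_mul, ← hu]
    exact u.mul_inv
  · rw [mul_assoc, ← (hcomm.units_inv_right).eq, ← mul_assoc, ← map_mul]
    rw [mul_comm c a, ← hu]
    exact u.mul_inv

theorem isUnit_end_powers_of_dvd (a b : R) (hab : a ∣ b) :
    ∀ s : Submonoid.powers a,
      IsUnit (algebraMap R (Module.End R (LocalizedModule (Submonoid.powers b) M)) s) := by
  rintro ⟨s, n, rfl⟩
  rw [map_pow]
  exact (isUnit_end_of_dvd a b hab).pow n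

theorem cechLoc_cechLoc (a b r : R) (hab : a ∣ b) (hbr : b ∣ r)
    (z : LocalizedModule (Submonoid.powers a) M) :
    cechLoc b r hbr (cechLoc a b hab z) = cechLoc a r (hab.trans hbr) z := by
  have : ((cechLoc b r hbr (M := M)).comp (cechLoc a b hab)) =
      cechLoc a r (hab.trans hbr) := by
    rw [show cechLoc a r (hab.trans hbr) (M := M) = LocalizedModule.lift _
      (LocalizedModule.mkLinearMap (Submonoid.powers r) M)
      (isUnit_end_powers_of_dvd a r (hab.trans hbr)) from rfl]
    rw [LocalizedModule.lift_unique _ _ _ ((cechLoc b r hbr (M := M)).comp (cechLoc a b hab))]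
    rw [LinearMap.comp_assoc, cechLoc_comp_mk, cechLoc_comp_mk]
  exact (congrArg (fun f => f z) this)

theorem isLocalizedModule_cechLoc {R : Type*} [CommRing R] {M : Type*} [AddCommGroup M]
    [Module R M] (a c b : R) (h : a * c = b) (hab : a ∣ b) :
    IsLocalizedModule (Submonoid.powers c) (cechLoc a b hab (M := M)) := by
  subst h
  set f := cechLoc a (a * c) hab (M := M) with hfdef
  constructor
  · rintro ⟨s, n, rfl⟩
    rw [map_pow]
    exact (isUnit_end_of_dvd c (a * c) ⟨a, mul_comm a c⟩).pow n
  · intro y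
    induction y using LocalizedModule.induction_on with
    | h m s =>
      obtain ⟨s, n, rfl⟩ := s
      refine ⟨⟨LocalizedModule.mk m ⟨a ^ n, n, rfl⟩, ⟨c ^ n, n, rfl⟩⟩, ?_⟩
      have ha : IsUnit (algebraMap R (Module.End R (LocalizedModule
          (Submonoid.powers (a * c)) M)) (a ^ n)) := by
        rw [map_pow]; exact (isUnit_end_of_dvd a (a * c) ⟨c, rfl⟩).pow n
      apply ((Module.End.isUnit_iff _).mp ha).injective
      rw [Module.algebraMap_end_apply, Module.algebraMap_end_apply]
      rw [← map_smul]
      have h1 : (a : R) ^ n • LocalizedModule.mk m (⟨a ^ n, n, rfl⟩ : Submonoid.powers a)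
          = LocalizedModule.mk m 1 := by
        rw [LocalizedModule.smul'_mk]
        exact LocalizedModule.mk_cancel (⟨a ^ n, n, rfl⟩ : Submonoid.powers a) m
      rw [h1, cechLoc_mk_one]
      simp only [Submonoid.smul_def, Submonoid.mk_smul, LocalizedModule.smul'_mk, smul_smul]
      rw [← mul_pow]
      exact LocalizedModule.mk_cancel (⟨(a * c) ^ n, n, rfl⟩ : Submonoid.powers (a * c)) m
  · intro z₁ z₂ e
    induction z₁ using LocalizedModule.induction_on with
    | h m₁ s₁ =>
      induction z₂ using LocalizedModule.induction_on with
      | h m₂ s₂ =>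
        obtain ⟨s₁, n₁, rfl⟩ := s₁
        obtain ⟨s₂, n₂, rfl⟩ := s₂
        -- from e derive equality in target of images of cleared numerators
        have e2 : f (LocalizedModule.mk (a ^ n₂ • m₁) 1)
            = f (LocalizedModule.mk (a ^ n₁ • m₂) 1) := by
          have h1 : (a : R) ^ (n₁ + n₂) • LocalizedModule.mk m₁
              (⟨a ^ n₁, n₁, rfl⟩ : Submonoid.powers a)
              = LocalizedModule.mk (a ^ n₂ • m₁) 1 := by
            rw [LocalizedModule.smul'_mk, pow_add, ← smul_smul]
            exact LocalizedModule.mk_cancel (⟨a ^ n₁, n₁, rfl⟩ : Submonoid.powers a) _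
          have h2 : (a : R) ^ (n₁ + n₂) • LocalizedModule.mk m₂
              (⟨a ^ n₂, n₂, rfl⟩ : Submonoid.powers a)
              = LocalizedModule.mk (a ^ n₁ • m₂) 1 := by
            rw [LocalizedModule.smul'_mk, pow_add, mul_comm, ← smul_smul]
            exact LocalizedModule.mk_cancel (⟨a ^ n₂, n₂, rfl⟩ : Submonoid.powers a) _
          rw [← h1, ← h2, map_smul, map_smul, e]
        rw [cechLoc_mk_one, cechLoc_mk_one, LocalizedModule.mk_eq] at e2
        obtain ⟨⟨w, k, rfl⟩, hw⟩ := e2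
        simp only [one_smul, Submonoid.mk_smul] at hw
        -- hw : (a*c)^k • a^n₂ • m₁ = (a*c)^k • a^n₁ • m₂
        refine ⟨⟨c ^ k, k, rfl⟩, ?_⟩
        simp only [Submonoid.smul_def, Submonoid.mk_smul, LocalizedModule.smul'_mk,
          LocalizedModule.mk_eq]
        refine ⟨⟨a ^ k, k, rfl⟩, ?_⟩
        simp only [Submonoid.smul_def, Submonoid.mk_smul, smul_smul] at hw ⊢
        rw [show a ^ k * (a ^ n₂ * c ^ k) = (a * c) ^ k * a ^ n₂ by rw [mul_pow]; ring,
          show a ^ k * (a ^ n₁ * c ^ k) = (a * c) ^ k * a ^ n₁ by rw [mul_pow]; ring]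
        exact hw

end CechAux

open scoped BigOperators
open Classical

noncomputable section

variable {R : Type*} [CommRing R]

/-- Degree `i` term of the Čech complex of the sequence `x` with coefficients in `M`:
the product over `i`-element subsets `t` of the index set of the localization of `M`
at the product of the `x j` for `j ∈ t`. -/
noncomputable abbrev CechC {ℓ : ℕ} (x : Fin ℓ → R) (M : Type*) [AddCommGroup M] [Module R M]
    (i : ℕ) : Type _ :=
  ∀ t : {t : Finset (Fin ℓ) // t.card = i}, LocalizedModule (Submonoid.powers (∏ j ∈ t.1, x j)) M

/-- The Čech differential `C^i → C^{i+1}`: the alternating sum of the further-localization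
maps. -/
noncomputable def cechD {ℓ : ℕ} (x : Fin ℓ → R) (M : Type*) [AddCommGroup M] [Module R M]
    (i : ℕ) : CechC x M i →ₗ[R] CechC x M (i + 1) where
  toFun m t := ∑ j ∈ (t.1).attach,
    ((-1 : ℤ) ^ ((t.1.filter (· < j.1)).card)) •
      cechLoc (∏ k ∈ t.1.erase j.1, x k) (∏ k ∈ t.1, x k)
        (Finset.prod_dvd_prod_of_subset _ _ _ (Finset.erase_subset _ _))
        (m ⟨t.1.erase j.1, by rw [Finset.card_erase_of_mem j.2, t.2]; omega⟩)
  map_add' := by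
    intro a b
    funext t
    simp [Pi.add_apply, map_add, smul_add, Finset.sum_add_distrib]
    rw [← Finset.sum_add_distrib]
    refine Finset.sum_congr rfl fun j _ => ?_
    first
    | exact smul_add _ _ _
    | exact zsmul_add _ _ _
  map_smul' := by
    intro r a
    funext t
    simp [Pi.smul_apply, map_smul, Finset.smul_sum, smul_comm r]

/-- The submodule of Čech coboundaries in degree `i`. -/
noncomputable def cechPrevRange {ℓ : ℕ} (x : Fin ℓ → R) (M : Type*) [AddCommGroup M]
    [Module R M] : (i : ℕ) → Submodule R (CechC x M i)
  | 0 => ⊥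
  | (i + 1) => LinearMap.range (cechD x M i)

/-- The `i`-th Čech cohomology of `M` with respect to the sequence `x`:
cocycles modulo coboundaries. -/
noncomputable abbrev CechH {ℓ : ℕ} (x : Fin ℓ → R) (M : Type*) [AddCommGroup M] [Module R M]
    (i : ℕ) : Type _ :=
  LinearMap.ker (cechD x M i) ⧸
    (cechPrevRange x M i).comap (LinearMap.ker (cechD x M i)).subtype


section CechTorsion

variable {R : Type*} [CommRing R] {M : Type*} [AddCommGroup M] [Module R M]
variable {ℓ : ℕ} (x : Fin ℓ → R)

theorem cechD_apply (i : ℕ) (m : CechC x M i) (tval : Finset (Fin ℓ))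
    (ht : tval.card = i + 1) :
    cechD x M i m ⟨tval, ht⟩ = ∑ j ∈ tval.attach,
      ((-1 : ℤ) ^ ((tval.filter (· < j.1)).card)) •
        cechLoc (∏ k ∈ tval.erase j.1, x k) (∏ k ∈ tval, x k)
          (Finset.prod_dvd_prod_of_subset _ _ _ (Finset.erase_subset _ _))
          (m ⟨tval.erase j.1, by rw [Finset.card_erase_of_mem j.2, ht]; omega⟩) := rfl

theorem cechLoc_fam_congr {i : ℕ}
    (g : ∀ s : {s : Finset (Fin ℓ) // s.card = i},
      LocalizedModule (Submonoid.powers (∏ k ∈ s.1, x k)) M)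
    {A B : Finset (Fin ℓ)} (e : A = B) (hA : A.card = i) (hB : B.card = i) {r : R}
    (hAr : (∏ k ∈ A, x k) ∣ r) (hBr : (∏ k ∈ B, x k) ∣ r) :
    cechLoc _ r hAr (g ⟨A, hA⟩) = cechLoc _ r hBr (g ⟨B, hB⟩) := by
  subst e; rfl

theorem fam_smul_zero_congr {i : ℕ}
    (g : ∀ s : {s : Finset (Fin ℓ) // s.card = i},
      LocalizedModule (Submonoid.powers (∏ k ∈ s.1, x k)) M)
    {A B : Finset (Fin ℓ)} (e : A = B) (hA : A.card = i) (hB : B.card = i) (r : R)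
    (h : r • g ⟨A, hA⟩ = 0) : r • g ⟨B, hB⟩ = 0 := by
  subst e; exact h

theorem zsign_smul {V : Type*} [AddCommGroup V] [Module R V] (e : ℕ) (v : V) :
    ((-1 : ℤ) ^ e) • v = ((-1 : R) ^ e) • v := by
  rw [← Int.cast_smul_eq_zsmul R]
  push_cast
  ring_nf

theorem cech_combo {R : Type*} [CommRing R] {V : Type*} [AddCommGroup V] [Module R V]
    {ι : Type*} (s : Finset ι) (ε : R) (r : R) (hε : ε * ε = 1) (τ : ι → R) (W : V)
    (Z : ι → V) (h : ε • W + ∑ k ∈ s, τ k • Z k = 0) :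
    (∑ k ∈ s, (-(ε * τ k)) • (r • Z k)) - r • W = 0 := by
  have h2 : ∑ k ∈ s, (-(ε * τ k)) • (r • Z k) = (-ε) • (r • ∑ k ∈ s, τ k • Z k) := by
    rw [Finset.smul_sum, Finset.smul_sum]
    exact Finset.sum_congr rfl fun k _ => by module
  rw [h2, eq_neg_of_add_eq_zero_right h]
  have h3 : (-ε) • (r • -(ε • W)) = ((ε * ε) * r) • W := by module
  rw [h3, hε, one_mul, sub_self]

theorem cech_sign_identity {R : Type*} [CommRing R] {ℓ : ℕ} (tval : Finset (Fin ℓ))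
    (j : Fin ℓ) (hj : j ∉ tval) {k : Fin ℓ} (hk : k ∈ tval) :
    ((-1 : R) ^ ((tval.filter (· < k)).card)) *
      ((-1 : R) ^ (((tval.erase k).filter (· < j)).card))
    = -(((-1 : R) ^ ((tval.filter (· < j)).card)) *
        ((-1 : R) ^ (((insert j tval).filter (· < k)).card))) := by
  have hne : k ≠ j := fun e => hj (e ▸ hk)
  have h1 : (tval.erase k).filter (· < j) = (tval.filter (· < j)).erase k :=
    Finset.filter_erase _ _ _
  rcases lt_or_gt_of_ne hne with hlt | hgt
  · have hmem : k ∈ tval.filter (· < j) := Finset.mem_filter.mpr ⟨hk, hlt⟩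
    have h2 : (insert j tval).filter (· < k) = tval.filter (· < k) := by
      rw [Finset.filter_insert, if_neg (by exact fun h => absurd (h.trans hlt) (lt_irrefl j))]
    have h3 := Finset.card_erase_add_one hmem
    rw [h1, h2, ← h3, pow_succ]
    ring
  · have hnotmem : k ∉ tval.filter (· < j) := by
      intro h
      exact absurd ((Finset.mem_filter.mp h).2) (not_lt_of_gt hgt)
    have h2 : (insert j tval).filter (· < k) = insert j (tval.filter (· < k)) := by
      rw [Finset.filter_insert, if_pos hgt]
    have h4 : j ∉ tval.filter (· < k) := fun h => hj (Finset.mem_filter.mp h).1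
    rw [h1, Finset.erase_eq_of_notMem hnotmem, h2, Finset.card_insert_of_notMem h4,
      pow_succ]
    ring

theorem cech_torsion (i : ℕ) (j : Fin ℓ)
    (c : LinearMap.ker (cechD x M i)) :
    ∃ n : ℕ, (x j) ^ n • (Submodule.Quotient.mk c : CechH x M i) = 0 := by
  suffices hsuf : ∃ n : ℕ, (x j) ^ n • (c : CechC x M i) ∈ cechPrevRange x M i by
    obtain ⟨n, hn⟩ := hsuf
    refine ⟨n, ?_⟩
    rw [← Submodule.Quotient.mk_smul, Submodule.Quotient.mk_eq_zero, Submodule.mem_comap]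
    exact hn
  have hc : cechD x M i (c : CechC x M i) = 0 := c.2
  match i with
  | 0 =>
    -- the cocycle maps to zero in the localization at `x j`
    have h1 : cechD x M 0 (c : CechC x M 0) ⟨{j}, Finset.card_singleton j⟩ = 0 := by
      rw [hc]; rfl
    rw [cechD_apply] at h1
    have hatt : ({j} : Finset (Fin ℓ)).attach
        = {⟨j, Finset.mem_singleton_self j⟩} := by
      ext ⟨a, ha⟩
      simp [Finset.mem_singleton.mp ha]
    rw [hatt, Finset.sum_singleton] at h1
    rw [zsign_smul (R := R)] at h1
    rw [cechLoc_fam_congr x (c : CechC x M 0) (Finset.erase_singleton j)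
      _ (Finset.card_empty) _ (one_dvd _)] at h1
    have hsign : ((({j} : Finset (Fin ℓ)).filter (· < j)).card) = 0 := by
      rw [Finset.filter_singleton, if_neg (lt_irrefl j)]
      rfl
    rw [hsign, pow_zero, one_smul] at h1
    have hloc := isLocalizedModule_cechLoc (M := M) (∏ k ∈ (∅ : Finset (Fin ℓ)), x k) (x j)
      (∏ k ∈ ({j} : Finset (Fin ℓ)), x k)
      (by rw [Finset.prod_empty, Finset.prod_singleton, one_mul]) (one_dvd _)
    obtain ⟨⟨s', n, rfl⟩, hs'⟩ := hloc.exists_of_eq (x₁ := (c : CechC x M 0) ⟨∅, rfl⟩)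
      (x₂ := 0) (by rw [h1, map_zero])
    simp only [Submonoid.smul_def, Submonoid.mk_smul, smul_zero] at hs'
    refine ⟨n, ?_⟩
    show _ ∈ (⊥ : Submodule R (CechC x M 0))
    rw [Submodule.mem_bot]
    funext t
    have ht : (∅ : Finset (Fin ℓ)) = t.1 := (Finset.card_eq_zero.mp t.2).symm
    show (x j) ^ n • (c : CechC x M 0) t = 0
    exact fam_smul_zero_congr x (c : CechC x M 0) ht rfl t.2 _ hs'
  | (i + 1) =>
    -- sign identity lemma is `cech_sign_identity`, combo lemma is `cech_combo` (defined above)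
    -- Step 0: choose pullbacks of the components of `c` indexed by `insert j s`.
    have key : ∀ (s : Finset (Fin ℓ)) (h : j ∉ s) (hsc : s.card = i),
        ∃ p : LocalizedModule (Submonoid.powers (∏ k ∈ s, x k)) M × ℕ,
          cechLoc (∏ k ∈ s, x k) (∏ k ∈ insert j s, x k)
            (Finset.prod_dvd_prod_of_subset _ _ _ (Finset.subset_insert j s)) p.1
            = (x j) ^ p.2 • (c : CechC x M (i + 1)) ⟨insert j s, by
                rw [Finset.card_insert_of_notMem h, hsc]⟩ := by
      intro s h hsc
      have hloc := isLocalizedModule_cechLoc (M := M) (∏ k ∈ s, x k) (x j)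
        (∏ k ∈ insert j s, x k) (by rw [Finset.prod_insert h, mul_comm])
        (Finset.prod_dvd_prod_of_subset _ _ _ (Finset.subset_insert j s))
      obtain ⟨⟨q, s'⟩, hq⟩ := hloc.surj ((c : CechC x M (i + 1)) ⟨insert j s, by
        rw [Finset.card_insert_of_notMem h, hsc]⟩)
      obtain ⟨s', n, rfl⟩ := s'
      exact ⟨⟨q, n⟩, by rw [← hq, Submonoid.smul_def]⟩
    choose pq hpq using key
    set N : ℕ := Finset.univ.sup (fun s : {s : Finset (Fin ℓ) // s.card = i} =>
      if h : j ∈ s.1 then 0 else (pq s.1 h s.2).2) with hNdef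
    have hNle : ∀ (s : Finset (Fin ℓ)) (h : j ∉ s) (hsc : s.card = i),
        (pq s h hsc).2 ≤ N := by
      intro s h hsc
      have h2 := Finset.le_sup (f := fun s : {s : Finset (Fin ℓ) // s.card = i} =>
        if h : j ∈ s.1 then 0 else (pq s.1 h s.2).2)
        (Finset.mem_univ (⟨s, hsc⟩ : {s : Finset (Fin ℓ) // s.card = i}))
      simp only [dif_neg h] at h2
      exact h2
    -- uniform-exponent pullback property
    have hP : ∀ (s : Finset (Fin ℓ)) (h : j ∉ s) (hsc : s.card = i),
        cechLoc (∏ k ∈ s, x k) (∏ k ∈ insert j s, x k)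
          (Finset.prod_dvd_prod_of_subset _ _ _ (Finset.subset_insert j s))
          ((x j) ^ (N - (pq s h hsc).2) • (pq s h hsc).1)
          = (x j) ^ N • (c : CechC x M (i + 1)) ⟨insert j s, by
              rw [Finset.card_insert_of_notMem h, hsc]⟩ := by
      intro s h hsc
      rw [map_smul, hpq s h hsc, smul_smul, ← pow_add,
        Nat.sub_add_cancel (hNle s h hsc)]
    -- the homotopy cochain
    set b : CechC x M i := fun s =>
      if h : j ∈ s.1 then 0
      else ((-1 : R) ^ ((s.1.filter (· < j)).card)) •
        ((x j) ^ (N - (pq s.1 h s.2).2) • (pq s.1 h s.2).1) with hbdef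
    have hbzero : ∀ (sv : Finset (Fin ℓ)) (hsv : sv.card = i), j ∈ sv →
        b ⟨sv, hsv⟩ = 0 := fun sv hsv h => dif_pos h
    have hbneg : ∀ (sv : Finset (Fin ℓ)) (hsv : sv.card = i) (h : j ∉ sv),
        b ⟨sv, hsv⟩ = ((-1 : R) ^ ((sv.filter (· < j)).card)) •
          ((x j) ^ (N - (pq sv h hsv).2) • (pq sv h hsv).1) := fun sv hsv h => dif_neg h
    -- Claim A : at a set containing j, the homotopy reproduces x_j^N • c exactly
    have claimA : ∀ (tval : Finset (Fin ℓ)) (htc : tval.card = i + 1), j ∈ tval →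
        cechD x M i b ⟨tval, htc⟩ = (x j) ^ N • (c : CechC x M (i + 1)) ⟨tval, htc⟩ := by
      intro tval htc hj
      obtain ⟨s, hs⟩ : ∃ s, tval.erase j = s := ⟨_, rfl⟩
      have e : insert j s = tval := by rw [← hs]; exact Finset.insert_erase hj
      have hjs : j ∉ s := hs ▸ Finset.notMem_erase _ _
      subst e
      have hsc : s.card = i := by
        rw [Finset.card_insert_of_notMem hjs] at htc; omega
      rw [cechD_apply]
      refine Eq.trans (Finset.sum_eq_single_of_mem
        (⟨j, Finset.mem_insert_self j s⟩ : {k // k ∈ insert j s})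
        (Finset.mem_attach _ _) ?_) ?_
      · rintro ⟨k, hkmem⟩ - hne
        have hjk : j ≠ k := fun e => hne (Subtype.ext e.symm)
        have hjmem : j ∈ (insert j s).erase k :=
          Finset.mem_erase.mpr ⟨hjk, Finset.mem_insert_self j s⟩
        rw [hbzero ((insert j s).erase k)
          (by rw [Finset.card_erase_of_mem hkmem, htc]; omega) hjmem, map_zero]; exact zsmul_zero _
      · rw [zsign_smul (R := R)]
        rw [cechLoc_fam_congr x b (Finset.erase_insert hjs)
          (by rw [Finset.erase_insert hjs]; exact hsc) hsc _
          (Finset.prod_dvd_prod_of_subset _ _ _ (Finset.subset_insert j s))]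
        rw [hbneg s hsc hjs, map_smul, hP s hjs hsc]
        rw [smul_smul, Finset.filter_insert, if_neg (lt_irrefl j), ← pow_add,
          Even.neg_one_pow ⟨_, rfl⟩, one_smul]
    -- Claim B : at a set not containing j, the defect is x_j-power torsion
    have claimB : ∀ (tval : Finset (Fin ℓ)) (htc : tval.card = i + 1), j ∉ tval →
        ∃ m : ℕ, (x j) ^ m • (cechD x M i b ⟨tval, htc⟩
          - (x j) ^ N • (c : CechC x M (i + 1)) ⟨tval, htc⟩) = 0 := by
      intro tval htc hj
      have hTc : (insert j tval).card = i + 1 + 1 := by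
        rw [Finset.card_insert_of_notMem hj, htc]
      have dvdT : (∏ k ∈ tval, x k) ∣ (∏ k ∈ insert j tval, x k) :=
        Finset.prod_dvd_prod_of_subset _ _ _ (Finset.subset_insert _ _)
      have hloc := isLocalizedModule_cechLoc (M := M) (∏ k ∈ tval, x k) (x j)
        (∏ k ∈ insert j tval, x k) (by rw [Finset.prod_insert hj, mul_comm]) dvdT
      suffices hG : cechLoc (∏ k ∈ tval, x k) (∏ k ∈ insert j tval, x k) dvdT
          (cechD x M i b ⟨tval, htc⟩
            - (x j) ^ N • (c : CechC x M (i + 1)) ⟨tval, htc⟩) = 0 by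
        obtain ⟨⟨s', n, rfl⟩, hs'⟩ := hloc.exists_of_eq (x₁ := _) (x₂ := 0)
          (by rw [hG, map_zero])
        refine ⟨n, ?_⟩
        simpa [Submonoid.smul_def] using hs'
      -- notation
      set W := cechLoc (∏ k ∈ tval, x k) (∏ k ∈ insert j tval, x k) dvdT
        ((c : CechC x M (i + 1)) ⟨tval, htc⟩) with hWdef
      set Z : {k // k ∈ tval} → LocalizedModule
          (Submonoid.powers (∏ k ∈ insert j tval, x k)) M := fun k =>
        cechLoc (∏ m ∈ insert j (tval.erase k.1), x m) (∏ m ∈ insert j tval, x m)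
          (Finset.prod_dvd_prod_of_subset _ _ _
            (Finset.insert_subset_insert j (Finset.erase_subset _ _)))
          ((c : CechC x M (i + 1)) ⟨insert j (tval.erase k.1), by
            rw [Finset.card_insert_of_notMem (fun h => hj (Finset.mem_of_mem_erase h)),
              Finset.card_erase_of_mem k.2, htc]; omega⟩) with hZdef
      set τ : {k // k ∈ tval} → R := fun k =>
        (-1 : R) ^ (((insert j tval).filter (· < k.1)).card) with hτdef
      -- cocycle condition at insert j tval
      have hcT : cechD x M (i + 1) (c : CechC x M (i + 1)) ⟨insert j tval, hTc⟩ = 0 := by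
        rw [hc]; rfl
      have hnotmem : (⟨j, Finset.mem_insert_self j tval⟩ : {k // k ∈ insert j tval}) ∉
          (tval.attach).image (fun k : {k // k ∈ tval} =>
            (⟨k.1, Finset.mem_insert_of_mem k.2⟩ : {k // k ∈ insert j tval})) := by
        intro hmem
        obtain ⟨⟨k, hk⟩, -, hke⟩ := Finset.mem_image.mp hmem
        have hkj : k = j := congrArg Subtype.val hke
        subst hkj
        exact hj hk
      have hinj : ∀ a ∈ tval.attach, ∀ b ∈ tval.attach,
          (⟨a.1, Finset.mem_insert_of_mem a.2⟩ : {k // k ∈ insert j tval}) =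
            ⟨b.1, Finset.mem_insert_of_mem b.2⟩ → a = b :=
        fun a _ b _ h => by
          apply Subtype.ext
          have h2 := congrArg Subtype.val h
          exact h2
      rw [cechD_apply, Finset.attach_insert, Finset.sum_insert hnotmem,
        Finset.sum_image hinj] at hcT
      -- identify the j-term
      have hterm_j : ((-1 : ℤ) ^ ((Finset.filter (· < j) (insert j tval)).card)) •
          cechLoc (∏ k ∈ (insert j tval).erase j, x k) (∏ k ∈ insert j tval, x k)
            (Finset.prod_dvd_prod_of_subset _ _ _ (Finset.erase_subset _ _))
            ((c : CechC x M (i + 1)) ⟨(insert j tval).erase j, by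
              rw [Finset.erase_insert hj, htc]⟩)
          = ((-1 : R) ^ ((tval.filter (· < j)).card)) • W := by
        rw [zsign_smul (R := R)]
        rw [cechLoc_fam_congr x (c : CechC x M (i + 1)) (Finset.erase_insert hj)
          (by rw [Finset.erase_insert hj, htc]) htc _ dvdT]
        rw [Finset.filter_insert, if_neg (lt_irrefl j), hWdef]
      -- identify the other terms
      have hterm_k : ∀ k : {k // k ∈ tval}, k ∈ tval.attach →
          ((-1 : ℤ) ^ ((Finset.filter (· < k.1) (insert j tval)).card)) •
          cechLoc (∏ m ∈ (insert j tval).erase k.1, x m) (∏ m ∈ insert j tval, x m)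
            (Finset.prod_dvd_prod_of_subset _ _ _ (Finset.erase_subset _ _))
            ((c : CechC x M (i + 1)) ⟨(insert j tval).erase k.1, by
              rw [Finset.erase_insert_of_ne (fun e => hj (by rw [e]; exact k.2)),
                Finset.card_insert_of_notMem (fun h => hj (Finset.mem_of_mem_erase h)),
                Finset.card_erase_of_mem k.2, htc]; omega⟩)
          = τ k • Z k := by
        intro k _
        rw [zsign_smul (R := R)]
        rw [cechLoc_fam_congr x (c : CechC x M (i + 1))
          (Finset.erase_insert_of_ne (fun e => hj (by rw [e]; exact k.2)))
          (by rw [Finset.erase_insert_of_ne (fun e => hj (by rw [e]; exact k.2)),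
                Finset.card_insert_of_notMem (fun h => hj (Finset.mem_of_mem_erase h)),
                Finset.card_erase_of_mem k.2, htc]; omega)
          (by rw [Finset.card_insert_of_notMem (fun h => hj (Finset.mem_of_mem_erase h)),
                Finset.card_erase_of_mem k.2, htc]; omega) _
          (Finset.prod_dvd_prod_of_subset _ _ _
            (Finset.insert_subset_insert j (Finset.erase_subset _ _)))]
      rw [hterm_j, Finset.sum_congr rfl hterm_k] at hcT
      -- step 1: compute the image of the homotopy term
      have step1 : cechLoc (∏ k ∈ tval, x k) (∏ k ∈ insert j tval, x k) dvdT
          (cechD x M i b ⟨tval, htc⟩)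
          = ∑ k ∈ tval.attach,
              (-(((-1 : R) ^ ((tval.filter (· < j)).card)) * τ k)) • ((x j) ^ N • Z k) := by
        rw [cechD_apply, map_sum]
        refine Finset.sum_congr rfl fun k _ => ?_
        rw [map_zsmul, zsign_smul (R := R), cechLoc_cechLoc]
        have hjk : j ∉ tval.erase k.1 := fun h => hj (Finset.mem_of_mem_erase h)
        have hkc : (tval.erase k.1).card = i := by
          rw [Finset.card_erase_of_mem k.2, htc]; omega
        rw [hbneg (tval.erase k.1) hkc hjk, map_smul]
        rw [← cechLoc_cechLoc (∏ m ∈ tval.erase k.1, x m)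
          (∏ m ∈ insert j (tval.erase k.1), x m) (∏ m ∈ insert j tval, x m)
          (Finset.prod_dvd_prod_of_subset _ _ _ (Finset.subset_insert _ _))
          (Finset.prod_dvd_prod_of_subset _ _ _
            (Finset.insert_subset_insert j (Finset.erase_subset _ _)))]
        rw [hP (tval.erase k.1) hjk hkc, map_smul]
        rw [smul_smul]
        congr 1
        exact cech_sign_identity (R := R) tval j hj k.2
      -- conclude
      rw [map_sub, map_smul, step1, ← hWdef]
      exact cech_combo tval.attach _ ((x j) ^ N)
        (by rw [← pow_add]; exact Even.neg_one_pow ⟨_, rfl⟩) τ W Z hcT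
    -- assemble: x_j^(N + Mx) • c is a coboundary
    have hall : ∀ t : {t : Finset (Fin ℓ) // t.card = i + 1},
        ∃ m : ℕ, (x j) ^ m • (cechD x M i b t
          - (x j) ^ N • (c : CechC x M (i + 1)) t) = 0 := by
      rintro ⟨tval, htc⟩
      by_cases hj : j ∈ tval
      · exact ⟨0, by rw [claimA tval htc hj]; simp⟩
      · exact claimB tval htc hj
    choose mfun hm using hall
    set Mx := Finset.univ.sup mfun with hMx
    refine ⟨N + Mx, ?_⟩
    show _ ∈ LinearMap.range (cechD x M i)
    refine ⟨(x j) ^ Mx • b, ?_⟩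
    rw [map_smul]
    funext t
    have h5 : (x j) ^ (Mx - mfun t) • ((x j) ^ (mfun t) •
        (cechD x M i b t - (x j) ^ N • (c : CechC x M (i + 1)) t)) = 0 := by
      rw [hm t, smul_zero]
    rw [smul_smul, ← pow_add, Nat.sub_add_cancel (Finset.le_sup (Finset.mem_univ t)),
      smul_sub, sub_eq_zero] at h5
    show (x j) ^ Mx • cechD x M i b t = ((x j) ^ (N + Mx) • (c : CechC x M (i + 1))) t
    rw [h5]
    show (x j) ^ Mx • (x j) ^ N • (c : CechC x M (i + 1)) t
      = (x j) ^ (N + Mx) • (c : CechC x M (i + 1)) t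
    rw [smul_smul, ← pow_add, Nat.add_comm Mx N]


end CechTorsion

/-- If `u ∈ (x)R` is a non-zero-divisor on `M` and multiplication by `u` is injective on the
Čech cohomology `H^i_x(M)`, then `H^i_x(M) = 0`. -/
theorem stmt_5 {R : Type*} [CommRing R] {ℓ : ℕ} (x : Fin ℓ → R)
    (M : Type*) [AddCommGroup M] [Module R M]
    (u : R) (hu : u ∈ Ideal.span (Set.range x)) (hreg : ∀ m : M, u • m = 0 → m = 0)
    (i : ℕ) (hinj : Function.Injective (fun h : CechH x M i => u • h)) :
    Subsingleton (CechH x M i) := by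
  have descend : ∀ (n : ℕ) (v : CechH x M i), u ^ n • v = 0 → v = 0 := by
    intro n
    induction n with
    | zero => intro v hv; simpa using hv
    | succ n ih =>
      intro v hv
      apply ih
      apply hinj
      show u • (u ^ n • v) = u • 0
      rw [smul_zero, smul_smul, ← pow_succ']
      exact hv
  refine subsingleton_of_forall_eq 0 fun h => ?_
  obtain ⟨z, rfl⟩ := Submodule.Quotient.mk_surjective _ h
  have hrad : ∃ n : ℕ, u ^ n • (Submodule.Quotient.mk z : CechH x M i) = 0 := by
    have hgen : ∀ jj : Fin ℓ, x jj ∈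
        (Submodule.span R {(Submodule.Quotient.mk z : CechH x M i)}).annihilator.radical := by
      intro jj
      obtain ⟨n, hn⟩ := cech_torsion x i jj z
      exact Ideal.mem_radical_iff.mpr
        ⟨n, (Submodule.mem_annihilator_span_singleton _ _).mpr hn⟩
    have hle : Ideal.span (Set.range x) ≤
        (Submodule.span R {(Submodule.Quotient.mk z : CechH x M i)}).annihilator.radical :=
      Ideal.span_le.mpr (Set.range_subset_iff.mpr hgen)
    obtain ⟨n, hn⟩ := Ideal.mem_radical_iff.mp (hle hu)
    exact ⟨n, (Submodule.mem_annihilator_span_singleton _ _).mp hn⟩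
  obtain ⟨n, hn⟩ := hrad
  exact descend n _ hn

end
end

section
/- Let V be a valuation domain of Krull dimension 2 with maximal ideal m, and let P be the unique prime ideal strictly between (0) and m. Let x ∈ P be nonzero and y ∈ m \ P. Then the sequence x, y is weakly proregular on V: for all n ≥ 1, the map on first Koszul homology H_1(x^{2n}, y^{2n}; V) → H_1(x^n, y^n; V) induced by the standard transition chain map is zero. -/
/-- Let `V` be a valuation domain of Krull dimension `2` with maximal ideal `m`, `P` the prime
strictly between `(0)` and `m`, `x ∈ P` nonzero, and `y ∈ m \ P`.  Then `x, y` is weakly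
proregular: for each `n ≥ 1` the transition map on first Koszul homology
`H_1(x^{2n}, y^{2n}; V) → H_1(x^n, y^n; V)`, sending the class of a relation `(r, s)` with
`r x^{2n} + s y^{2n} = 0` to the class of `(r x^n, s y^n)`, is zero; i.e. `(r x^n, s y^n)`
lies in the submodule of boundaries `V·(y^n, -x^n)`. -/
theorem stmt_6 {V : Type*} [CommRing V] [IsDomain V] [ValuationRing V]
    (h2 : ringKrullDim V = 2) (P : Ideal V) [P.IsPrime] (hP0 : ⊥ < P)
    (hPm : P < IsLocalRing.maximalIdeal V)
    (x y : V) (hx : x ∈ P) (hx0 : x ≠ 0)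
    (hy : y ∈ IsLocalRing.maximalIdeal V) (hyP : y ∉ P) :
    ∀ n : ℕ, 1 ≤ n → ∀ r s : V, r * x ^ (2 * n) + s * y ^ (2 * n) = 0 →
      ∃ a : V, r * x ^ n = a * y ^ n ∧ s * y ^ n = a * (-(x ^ n)) := by
  intro n hn r s hrel
  obtain ⟨c, hc | hc⟩ := ValuationRing.cond x y
  · exact absurd (hc ▸ P.mul_mem_right c hx) hyP
  · refine ⟨r * c ^ n, ?_, ?_⟩
    · rw [← hc]; ring
    · have hy0 : y ≠ 0 := fun h => hyP (by simpa [h] using P.zero_mem)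
      have key : y ^ n * (s * y ^ n + r * c ^ n * x ^ n) = 0 := by
        rw [← hrel, ← hc]; ring
      have h2' := (mul_eq_zero.mp key).resolve_left (pow_ne_zero n hy0)
      linear_combination h2'
end

section
/- Let f : R → S be a faithfully flat homomorphism of commutative rings and x = x_1, ..., x_ℓ a finite sequence in R. Then x is weakly proregular on R if and only if f(x) is weakly proregular on S. -/
open scoped BigOperators
open Classical

set_option maxHeartbeats 1000000
set_option synthInstance.maxHeartbeats 1000000

noncomputable section

variable {R : Type*} [CommRing R]

/-- Degree `i` term of the Koszul complex on `ℓ` elements: free module indexed by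
`i`-element subsets of the index set. -/
abbrev KoszulC (R : Type*) [CommRing R] (ℓ i : ℕ) : Type _ :=
  {t : Finset (Fin ℓ) // t.card = i} → R

/-- The Koszul differential `K_{i+1} → K_i` for the sequence `x^k = x_1^k, ..., x_ℓ^k`. -/
noncomputable def koszulD {ℓ : ℕ} (x : Fin ℓ → R) (k : ℕ) (i : ℕ) :
    KoszulC R ℓ (i + 1) →ₗ[R] KoszulC R ℓ i where
  toFun m s := ∑ j ∈ (s.1ᶜ).attach,
    ((-1 : ℤ) ^ ((s.1.filter (· < j.1)).card)) •
      ((x j.1 ^ k) * m ⟨insert j.1 s.1, by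
        rw [Finset.card_insert_of_notMem (Finset.mem_compl.mp j.2), s.2]⟩)
  map_add' := by
    intro a b
    funext s
    simp [mul_add, smul_add, Finset.sum_add_distrib]
  map_smul' := by
    intro r a
    funext s
    simp [Finset.mul_sum, mul_smul_comm, mul_left_comm]
  
/-- The standard transition chain map `K(x^m) → K(x^n)` (for `n ≤ m`) in degree `i`:
multiplication on the component indexed by `t` by `∏_{j ∈ t} x_j^{m-n}`. -/
noncomputable def koszulTr {ℓ : ℕ} (x : Fin ℓ → R) (m n i : ℕ) :
    KoszulC R ℓ i →ₗ[R] KoszulC R ℓ i where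
  toFun z t := (∏ j ∈ t.1, x j ^ (m - n)) * z t
  map_add' := by intro a b; funext t; simp [mul_add]
  map_smul' := by intro r a; funext t; simp; ring

/-- A finite sequence `x` is weakly proregular if for each `n` there is `m ≥ n` such that
the transition maps `H_i(x^m; R) → H_i(x^n; R)` on Koszul homology vanish for all `i ≥ 1`;
equivalently, the transition image of every cycle is a boundary. -/
def WeaklyProregular {ℓ : ℕ} (x : Fin ℓ → R) : Prop :=
  ∀ n : ℕ, 1 ≤ n → ∃ m, n ≤ m ∧ ∀ i : ℕ, ∀ z : KoszulC R ℓ (i + 1),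
    koszulD x m i z = 0 →
      ∃ b : KoszulC R ℓ (i + 1 + 1), koszulD x n (i + 1) b = koszulTr x m n (i + 1) z



section Aux

open TensorProduct

variable {S : Type*} [CommRing S] [Algebra R S]

/-- Componentwise scalar extension `KoszulC R → KoszulC S`. -/
noncomputable def koszulF (S : Type*) [CommRing S] [Algebra R S] (ℓ i : ℕ) :
    KoszulC R ℓ i →ₗ[R] KoszulC S ℓ i :=
  LinearMap.compLeft (Algebra.linearMap R S) _

lemma koszulF_apply {ℓ i : ℕ} (z : KoszulC R ℓ i) (t : {t : Finset (Fin ℓ) // t.card = i}) :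
    koszulF S ℓ i z t = algebraMap R S (z t) := rfl

lemma koszulF_koszulD {ℓ : ℕ} (x : Fin ℓ → R) (k i : ℕ) (z : KoszulC R ℓ (i + 1)) :
    koszulD (fun j => algebraMap R S (x j)) k i (koszulF S ℓ (i + 1) z) =
      koszulF S ℓ i (koszulD x k i z) := by
  funext t
  simp only [koszulD, LinearMap.coe_mk, AddHom.coe_mk, koszulF_apply, map_sum, map_zsmul,
    map_mul, map_pow]

lemma koszulF_koszulTr {ℓ : ℕ} (x : Fin ℓ → R) (m n i : ℕ) (z : KoszulC R ℓ i) :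
    koszulTr (fun j => algebraMap R S (x j)) m n i (koszulF S ℓ i z) =
      koszulF S ℓ i (koszulTr x m n i z) := by
  funext t
  simp only [koszulTr, LinearMap.coe_mk, AddHom.coe_mk, koszulF_apply, map_mul, map_prod, map_pow]

/-- Base-change comparison isomorphism in each degree. -/
noncomputable def koszulE (S : Type*) [CommRing S] [Algebra R S] (ℓ i : ℕ) :
    S ⊗[R] KoszulC R ℓ i ≃ₗ[S] KoszulC S ℓ i :=
  TensorProduct.piScalarRight R S S _

lemma koszulE_tmul {ℓ i : ℕ} (s : S) (z : KoszulC R ℓ i) :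
    koszulE S ℓ i (s ⊗ₜ[R] z) = s • koszulF S ℓ i z := by
  funext t
  simp only [koszulE, TensorProduct.piScalarRight_apply, TensorProduct.piScalarRightHom_tmul,
    Pi.smul_apply, koszulF_apply, Algebra.smul_def, smul_eq_mul, Algebra.algebraMap_self_apply]
  ring

lemma koszulE_lTensor_koszulD {ℓ : ℕ} (x : Fin ℓ → R) (k i : ℕ)
    (w : S ⊗[R] KoszulC R ℓ (i + 1)) :
    koszulE S ℓ i (LinearMap.lTensor S (koszulD x k i) w) =
      koszulD (fun j => algebraMap R S (x j)) k i (koszulE S ℓ (i + 1) w) := by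
  induction w using TensorProduct.induction_on with
  | zero => simp
  | tmul s z =>
      rw [LinearMap.lTensor_tmul, koszulE_tmul, koszulE_tmul, map_smul, koszulF_koszulD]
  | add a b ha hb => simp only [map_add, ha, hb]

end Aux

/-- Weak proregularity ascends and descends along a faithfully flat ring map: for a
faithfully flat `R`-algebra `S` and a finite sequence `x` in `R`, `x` is weakly proregular
on `R` iff its image in `S` is weakly proregular on `S`. -/
theorem stmt_11 {R : Type*} [CommRing R] {S : Type*} [CommRing S] [Algebra R S]
    [Module.FaithfullyFlat R S] {ℓ : ℕ} (x : Fin ℓ → R) :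
    WeaklyProregular x ↔ WeaklyProregular (fun i => algebraMap R S (x i)) := by
  constructor
  · -- ascent, uses flatness
    intro h n hn
    obtain ⟨m, hnm, hM⟩ := h n hn
    refine ⟨m, hnm, fun i z hz => ?_⟩
    set d := koszulD x m i with hd
    have hex : Function.Exact (LinearMap.lTensor S (LinearMap.ker d).subtype)
        (LinearMap.lTensor S d) :=
      Module.Flat.lTensor_exact S d.exact_subtype_ker_map
    have h1 : LinearMap.lTensor S d ((koszulE S ℓ (i + 1)).symm z) = 0 := by
      apply (koszulE S ℓ i).injective
      rw [koszulE_lTensor_koszulD, LinearEquiv.apply_symm_apply, hz, map_zero]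
    obtain ⟨w, hw⟩ := (hex _).mp h1
    have hzw : z = koszulE S ℓ (i + 1) (LinearMap.lTensor S (LinearMap.ker d).subtype w) := by
      rw [hw, LinearEquiv.apply_symm_apply]
    rw [hzw]
    clear hzw hw h1 hz z
    induction w using TensorProduct.induction_on with
    | zero => exact ⟨0, by simp⟩
    | tmul s c =>
        obtain ⟨b, hb⟩ := hM i c.1 c.2
        refine ⟨s • koszulF S ℓ (i + 1 + 1) b, ?_⟩
        rw [LinearMap.lTensor_tmul, koszulE_tmul, map_smul, map_smul,
          koszulF_koszulTr, koszulF_koszulD, hb]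
        rfl
    | add a b ha hb =>
        obtain ⟨ba, hba⟩ := ha
        obtain ⟨bb, hbb⟩ := hb
        exact ⟨ba + bb, by simp only [map_add, hba, hbb]⟩
  · -- descent, uses faithful flatness
    intro h n hn
    obtain ⟨m, hnm, hM⟩ := h n hn
    refine ⟨m, hnm, fun i z hz => ?_⟩
    have hzS : koszulD (fun j => algebraMap R S (x j)) m i (koszulF S ℓ (i + 1) z) = 0 := by
      rw [koszulF_koszulD, hz, map_zero]
    obtain ⟨bS, hbS⟩ := hM i (koszulF S ℓ (i + 1) z) hzS
    set y := koszulTr x m n (i + 1) z with hy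
    set d' := koszulD x n (i + 1) with hd'
    set q := (LinearMap.range d').mkQ with hq
    -- 1 ⊗ y is in the image of lTensor d'
    have key : (1 : S) ⊗ₜ[R] y =
        LinearMap.lTensor S d' ((koszulE S ℓ (i + 1 + 1)).symm bS) := by
      apply (koszulE S ℓ (i + 1)).injective
      rw [koszulE_lTensor_koszulD, LinearEquiv.apply_symm_apply, hbS, koszulE_tmul,
        koszulF_koszulTr, one_smul]
    have hqd : q ∘ₗ d' = 0 := by
      ext b
      simp [hq, Submodule.Quotient.mk_eq_zero]
    have hq1 : (1 : S) ⊗ₜ[R] (q y) = 0 := by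
      have h2 : LinearMap.lTensor S q ((1 : S) ⊗ₜ[R] y) = (1 : S) ⊗ₜ[R] (q y) :=
        LinearMap.lTensor_tmul S q 1 y
      rw [← h2, key, ← LinearMap.lTensor_comp_apply, hqd, LinearMap.lTensor_zero,
        LinearMap.zero_apply]
    have hpsi : LinearMap.toSpanSingleton R _ (q y) = 0 := by
      rw [Module.FaithfullyFlat.zero_iff_lTensor_zero R S]
      apply TensorProduct.ext'
      intro s r
      rw [LinearMap.lTensor_tmul, LinearMap.zero_apply, LinearMap.toSpanSingleton_apply,
        TensorProduct.tmul_smul]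
      have : s ⊗ₜ[R] (q y) = s • ((1 : S) ⊗ₜ[R] (q y)) := by
        rw [TensorProduct.smul_tmul', smul_eq_mul, mul_one]
      rw [this, hq1, smul_zero, smul_zero]
    have hqy : q y = 0 := by
      simpa using LinearMap.congr_fun hpsi 1
    obtain ⟨b, hb⟩ := (Submodule.Quotient.mk_eq_zero _).mp hqy
    exact ⟨b, hb⟩

end
end

section
/- Let R ⊆ S be commutative rings with R quasi-local with maximal ideal m, S a finite R-module, and ρ : S → R an R-module retraction (ρ(r) = r for all r ∈ R). Then there exists a maximal ideal q of S such that for every x ∈ S \ q, ρ(xS) = R. -/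
/-- Let `R ⊆ S` be commutative rings with `R` quasi-local, `S` finite as an `R`-module, and
`ρ : S → R` an `R`-module retraction. Then there is a maximal ideal `q` of `S` such that
`ρ(xS) = R` for every `x ∈ S \ q`. -/
theorem stmt_15 {R S : Type*} [CommRing R] [CommRing S] [Algebra R S] [IsLocalRing R]
    [Module.Finite R S] (hinj : Function.Injective (algebraMap R S))
    (ρ : S →ₗ[R] R) (hρ : ∀ r : R, ρ (algebraMap R S r) = r) :
    ∃ q : Ideal S, q.IsMaximal ∧
      ∀ x : S, x ∉ q → Submodule.map ρ ((Ideal.span {x}).restrictScalars R) = ⊤ := by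
  set m := IsLocalRing.maximalIdeal R with hm
  let I : Ideal S :=
  { carrier := {x | ∀ s : S, ρ (x * s) ∈ m}
    add_mem' := by
      intro a b ha hb s
      have : (a + b) * s = a * s + b * s := add_mul a b s
      rw [this, map_add]
      exact m.add_mem (ha s) (hb s)
    zero_mem' := by
      intro s
      simp only [zero_mul, map_zero]
      exact m.zero_mem
    smul_mem' := by
      intro c a ha s
      have : c • a * s = a * (c * s) := by rw [smul_eq_mul]; ring
      rw [this]
      exact ha (c * s) }
  have hIne : I ≠ ⊤ := by
    intro h
    have h1 : (1 : S) ∈ I := h ▸ Submodule.mem_top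
    have := h1 1
    rw [one_mul] at this
    have h1' : ρ (1 : S) = 1 := by
      have := hρ 1
      rwa [map_one] at this
    rw [h1'] at this
    exact (IsLocalRing.maximalIdeal.isMaximal R).ne_top (Ideal.eq_top_of_isUnit_mem _ this isUnit_one)
  obtain ⟨q, hqmax, hle⟩ := Ideal.exists_le_maximal I hIne
  refine ⟨q, hqmax, fun x hx => ?_⟩
  have hxI : x ∉ I := fun h => hx (hle h)
  simp only [Submodule.mem_mk, AddSubmonoid.mem_mk, AddSubsemigroup.mem_mk, Set.mem_setOf_eq,
    not_forall, I] at hxI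
  obtain ⟨s, hs⟩ := hxI
  have hu : IsUnit (ρ (x * s)) := by
    by_contra h
    exact hs (IsLocalRing.mem_maximalIdeal _ |>.mpr h)
  obtain ⟨u, hu⟩ := hu
  rw [Submodule.eq_top_iff']
  intro r
  refine ⟨(r * (↑u⁻¹ : R)) • (x * s), ?_, ?_⟩
  · have : x * s ∈ Ideal.span ({x} : Set S) := by
      exact Ideal.mul_mem_right _ _ (Ideal.mem_span_singleton_self x)
    exact Submodule.smul_mem _ _ this
  · rw [map_smul, ← hu, smul_eq_mul, mul_assoc, Units.inv_mul, mul_one]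
end

section
/- Let R ⊆ S be commutative rings, ρ : S → R an R-module retraction, M an R-module, and q a maximal ideal of S with the property that ρ(xS) = R for every x ∈ S \ q. If S_q ⊗_R M = 0 then M = 0. -/
/-- Let `R ⊆ S` be commutative rings, `ρ : S → R` an `R`-module retraction, `M` an `R`-module,
and `q` a maximal ideal of `S` such that `ρ(xS) = R` for every `x ∈ S \ q`.
If `S_q ⊗_R M = 0` then `M = 0`. -/
theorem stmt_16 {R S : Type*} [CommRing R] [CommRing S] [Algebra R S]
    (hinj : Function.Injective (algebraMap R S))
    (ρ : S →ₗ[R] R) (hρ : ∀ r : R, ρ (algebraMap R S r) = r)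
    (q : Ideal S) [q.IsMaximal]
    (hq : ∀ x : S, x ∉ q → Submodule.map ρ ((Ideal.span {x}).restrictScalars R) = ⊤)
    (M : Type*) [AddCommGroup M] [Module R M]
    (h : Subsingleton (TensorProduct R (Localization.AtPrime q) M)) :
    Subsingleton M := by
  haveI hloc : IsLocalizedModule q.primeCompl
      (TensorProduct.mk S (Localization.AtPrime q) (TensorProduct R S M) 1) :=
    (isLocalizedModule_iff_isBaseChange q.primeCompl (Localization.AtPrime q) _).mpr
      (TensorProduct.isBaseChange S (TensorProduct R S M) (Localization.AtPrime q))
  haveI hsub : Subsingleton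
      (TensorProduct S (Localization.AtPrime q) (TensorProduct R S M)) :=
    (TensorProduct.AlgebraTensorModule.cancelBaseChange R S (Localization.AtPrime q)
      (Localization.AtPrime q) M).toEquiv.subsingleton
  constructor
  intro a b
  suffices h0 : ∀ m : M, m = 0 by rw [h0 a, h0 b]
  intro m
  have h1 : TensorProduct.mk S (Localization.AtPrime q) (TensorProduct R S M) 1
      ((1 : S) ⊗ₜ[R] m) = 0 := Subsingleton.elim _ _
  obtain ⟨x, hx⟩ := (IsLocalizedModule.eq_zero_iff q.primeCompl _).mp h1
  have hxm : (x : S) ⊗ₜ[R] m = (0 : TensorProduct R S M) := by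
    simpa [TensorProduct.smul_tmul', Submonoid.smul_def] using hx
  have hmem : (1 : R) ∈ Submodule.map ρ ((Ideal.span {(x : S)}).restrictScalars R) := by
    rw [hq (x : S) x.2]; trivial
  obtain ⟨y, hy, hρy⟩ := hmem
  simp only [SetLike.mem_coe, Submodule.restrictScalars_mem, Ideal.mem_span_singleton] at hy
  obtain ⟨c, rfl⟩ := hy
  have hyx : ((x : S) * c) ⊗ₜ[R] m = (0 : TensorProduct R S M) := by
    have : c • ((x : S) ⊗ₜ[R] m) = (0 : TensorProduct R S M) := by rw [hxm, smul_zero]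
    rwa [TensorProduct.smul_tmul', smul_eq_mul, mul_comm c] at this
  have := congrArg ((TensorProduct.lid R M).toLinearMap ∘ₗ LinearMap.rTensor M ρ) hyx
  simpa [hρy] using this
end

section
/- Let R ⊆ S be commutative rings, ρ : S → R an R-module retraction, q a maximal ideal of S with ρ(xS) = R for all x ∈ S \ q, and M an R-module. If a sequence x of elements of R is a regular sequence on S_q ⊗_R M, then x is a regular sequence on M. -/
universe u

variable {R : Type u} [CommRing R]

/-- `PossiblyImproperRegular R l N` means the list `l` is a possibly improper regular
sequence on the `R`-module `N`: each entry is a non-zero-divisor modulo the previous ones. -/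
def PossiblyImproperRegular (R : Type u) [CommRing R] :
    List R → (N : Type u) → [inst : AddCommGroup N] → [inst2 : Module R N] → Prop
  | [], _, _, _ => True
  | a :: as, N, _, _ => (∀ m : N, a • m = 0 → m = 0) ∧
      PossiblyImproperRegular R as (N ⧸ (Ideal.span {a} • (⊤ : Submodule R N)))

/-- `IsRegularSeqOn R l N`: the list `l` is a regular sequence on `N`, i.e. a possibly
improper regular sequence with `(l)N ≠ N`. -/
def IsRegularSeqOn (R : Type u) [CommRing R] (l : List R) (N : Type u) [AddCommGroup N]
    [Module R N] : Prop :=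
  PossiblyImproperRegular R l N ∧ (Ideal.span {a | a ∈ l}) • (⊤ : Submodule R N) ≠ ⊤

open TensorProduct in
/-- The image of `a • id` is `(a) • ⊤`. -/
lemma range_smul_id (a : R) (N : Type u) [AddCommGroup N] [Module R N] :
    LinearMap.range (a • (LinearMap.id : N →ₗ[R] N)) = Ideal.span {a} • (⊤ : Submodule R N) := by
  apply le_antisymm
  · rintro _ ⟨y, rfl⟩
    show a • y ∈ _
    exact Submodule.smul_mem_smul (Ideal.mem_span_singleton_self a) trivial
  · refine Submodule.smul_le.mpr fun r hr n _ => ?_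
    obtain ⟨c, rfl⟩ := Ideal.mem_span_singleton'.mp hr
    exact ⟨c • n, by rw [LinearMap.smul_apply, LinearMap.id_apply, smul_smul, mul_comm a c]⟩

/-- Possibly improper regularity transfers along linear equivalences. -/
lemma pir_equiv : ∀ (l : List R) (N N' : Type u) [AddCommGroup N] [Module R N]
    [AddCommGroup N'] [Module R N'] (_ : N ≃ₗ[R] N'),
    PossiblyImproperRegular R l N → PossiblyImproperRegular R l N'
  | [], _, _, _, _, _, _, _, _ => trivial
  | a :: as, N, N', _, _, _, _, e, h => by
    obtain ⟨h1, h2⟩ := h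
    refine ⟨fun m hm => ?_, ?_⟩
    · have h0 : e.symm (a • m) = 0 := by rw [hm, map_zero]
      rw [map_smul] at h0
      have := h1 _ h0
      have := congrArg e this
      simpa using this
    · have hmap : Submodule.map (e : N →ₗ[R] N') (Ideal.span {a} • (⊤ : Submodule R N))
          = Ideal.span {a} • (⊤ : Submodule R N') := by
        rw [Submodule.map_smul'', Submodule.map_top, LinearEquiv.range]
      exact pir_equiv as _ _ (Submodule.Quotient.equiv _ _ e hmap) h2

open TensorProduct in
/-- If the base change functor to `A` reflects vanishing of elements (purity), then possibly
improper regularity descends from `A ⊗ M` to `M`. -/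
lemma pir_descend (A : Type u) [CommRing A] [Algebra R A]
    (hpure : ∀ (M : Type u) [AddCommGroup M] [Module R M] (m : M),
      (1 : A) ⊗ₜ[R] m = 0 → m = 0) :
    ∀ (l : List R) (M : Type u) [AddCommGroup M] [Module R M],
      PossiblyImproperRegular R l (A ⊗[R] M) → PossiblyImproperRegular R l M
  | [], _, _, _, _ => trivial
  | a :: as, M, _, _, h => by
    obtain ⟨h1, h2⟩ := h
    constructor
    · intro m hm
      refine hpure M m (h1 _ ?_)
      rw [← TensorProduct.tmul_smul, hm, TensorProduct.tmul_zero]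
    · set K : Submodule R M := Ideal.span {a} • (⊤ : Submodule R M) with hK
      have hexact : Function.Exact (a • (LinearMap.id : M →ₗ[R] M)) K.mkQ := by
        rw [LinearMap.exact_iff, Submodule.ker_mkQ, hK, ← range_smul_id]
      have hsurj := Submodule.mkQ_surjective K
      have hT := lTensor_exact A hexact hsurj
      have hker : LinearMap.ker (LinearMap.lTensor A K.mkQ)
          = Ideal.span {a} • (⊤ : Submodule R (A ⊗[R] M)) := by
        rw [hT.linearMap_ker_eq, LinearMap.lTensor_smul, LinearMap.lTensor_id,
          range_smul_id]
      have e : ((A ⊗[R] M) ⧸ (Ideal.span {a} • (⊤ : Submodule R (A ⊗[R] M))))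
          ≃ₗ[R] A ⊗[R] (M ⧸ K) :=
        (Submodule.quotEquivOfEq _ _ hker.symm).trans
          ((LinearMap.lTensor A K.mkQ).quotKerEquivOfSurjective
            (LinearMap.lTensor_surjective A hsurj))
      exact pir_descend A hpure as _ (pir_equiv as _ _ e h2)

open TensorProduct in
/-- Let `R ⊆ S` be commutative rings, `ρ : S → R` an `R`-module retraction, `q` a maximal
ideal of `S` with `ρ(xS) = R` for all `x ∈ S \ q`, and `M` an `R`-module. The base change
to `S_q` reflects vanishing of elements. -/
lemma pure_of_retraction {R S : Type u} [CommRing R] [CommRing S] [Algebra R S]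
    (ρ : S →ₗ[R] R)
    (q : Ideal S) [q.IsMaximal]
    (hq : ∀ x : S, x ∉ q → Submodule.map ρ ((Ideal.span {x}).restrictScalars R) = ⊤)
    (M : Type u) [AddCommGroup M] [Module R M] (m : M)
    (hm : (1 : Localization.AtPrime q) ⊗ₜ[R] m = 0) : m = 0 := by
  set A := Localization.AtPrime q
  have h0 : (1 : A) ⊗ₜ[S] ((1 : S) ⊗ₜ[R] m) = (0 : A ⊗[S] (S ⊗[R] M)) := by
    have := congrArg (TensorProduct.AlgebraTensorModule.cancelBaseChange R S A A M).symm hm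
    rwa [TensorProduct.AlgebraTensorModule.cancelBaseChange_symm_tmul, map_zero] at this
  -- the base change map to the localization is a localized module
  have hbc : IsLocalizedModule q.primeCompl (TensorProduct.mk S A (S ⊗[R] M) 1) :=
    (isLocalizedModule_iff_isBaseChange q.primeCompl A _).mpr
      (TensorProduct.isBaseChange S (S ⊗[R] M) A)
  have h1 : TensorProduct.mk S A (S ⊗[R] M) 1 ((1 : S) ⊗ₜ[R] m) = 0 := h0
  obtain ⟨⟨x, hx⟩, hxm⟩ := (IsLocalizedModule.eq_zero_iff q.primeCompl _).mp h1
  have hxm' : x ⊗ₜ[R] m = (0 : S ⊗[R] M) := by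
    have : x • ((1 : S) ⊗ₜ[R] m) = x ⊗ₜ[R] m := by
      rw [TensorProduct.smul_tmul', smul_eq_mul, mul_one]
    rw [← this]; exact hxm
  -- choose `c` with `ρ (c * x) = 1`
  have h2 : (1 : R) ∈ Submodule.map ρ ((Ideal.span {x}).restrictScalars R) := by
    rw [hq x hx]; trivial
  obtain ⟨y, hy, hρy⟩ := h2
  obtain ⟨c, hc⟩ := Ideal.mem_span_singleton'.mp hy
  -- apply `ρ ∘ (c * ·) ⊗ id`
  have h3 := congrArg (LinearMap.rTensor M (ρ ∘ₗ LinearMap.mulLeft R c)) hxm'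
  rw [map_zero, LinearMap.rTensor_tmul] at h3
  have h4 := congrArg (TensorProduct.lid R M) h3
  rw [map_zero, TensorProduct.lid_tmul, LinearMap.comp_apply, LinearMap.mulLeft_apply, hc, hρy,
    one_smul] at h4
  exact h4

/-- Let `R ⊆ S` be commutative rings, `ρ : S → R` an `R`-module retraction, `q` a maximal
ideal of `S` with `ρ(xS) = R` for all `x ∈ S \ q`, and `M` an `R`-module. If a sequence `x`
of elements of `R` is a regular sequence on `S_q ⊗_R M`, then it is a regular sequence
on `M`. -/
theorem stmt_17 {R S : Type u} [CommRing R] [CommRing S] [Algebra R S]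
    (hinj : Function.Injective (algebraMap R S))
    (ρ : S →ₗ[R] R) (hρ : ∀ r : R, ρ (algebraMap R S r) = r)
    (q : Ideal S) [q.IsMaximal]
    (hq : ∀ x : S, x ∉ q → Submodule.map ρ ((Ideal.span {x}).restrictScalars R) = ⊤)
    (M : Type u) [AddCommGroup M] [Module R M] (l : List R)
    (h : IsRegularSeqOn R l (TensorProduct R (Localization.AtPrime q) M)) :
    IsRegularSeqOn R l M := by
  obtain ⟨hpir, hproper⟩ := h
  constructor
  · exact pir_descend (Localization.AtPrime q)
      (fun M' _ _ m hm => pure_of_retraction ρ q hq M' m hm) l M hpir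
  · intro htop
    apply hproper
    rw [eq_top_iff]
    conv_lhs => rw [← TensorProduct.span_tmul_eq_top R (Localization.AtPrime q) M]
    rw [Submodule.span_le]
    rintro _ ⟨s, m, rfl⟩
    have hmem : m ∈ Ideal.span {a | a ∈ l} • (⊤ : Submodule R M) := by rw [htop]; trivial
    refine Submodule.smul_induction_on hmem (fun r hr n _ => ?_) (fun u v hu hv => ?_)
    · rw [TensorProduct.tmul_smul]
      exact Submodule.smul_mem_smul hr trivial
    · rw [TensorProduct.tmul_add]
      exact Submodule.add_mem _ hu hv
end

section
/- Let S = C[[x,y]] be the formal power series ring over the complex numbers and R = C + xC[[x,y]] the subring of power series whose constant-coefficient part (as a series in y with coefficients in C[[x]]) lies in C + xC[[x]]. Then in R one has (xyR :_R x) = xyS = (xyR :_R x^2); in particular the annihilator chain of x modulo xyR stabilizes, so x is weakly proregular on R/xyR. -/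
open MvPowerSeries

/-- Membership in the subring `R = ℂ + x·ℂ[[x,y]]` of `S = ℂ[[x,y]]`. -/
def memR (f : MvPowerSeries (Fin 2) ℂ) : Prop :=
  ∃ (c : ℂ) (g : MvPowerSeries (Fin 2) ℂ), f = MvPowerSeries.C c + X 0 * g

private lemma hX0_ne : (X 0 : MvPowerSeries (Fin 2) ℂ) ≠ 0 := by
  intro h
  have := congrArg (coeff (Finsupp.single (0 : Fin 2) 1)) h
  simp at this

private lemma coeff_X1_eq_zero_of_X0_dvd {f : MvPowerSeries (Fin 2) ℂ}
    (h : (X 0 : MvPowerSeries (Fin 2) ℂ) ∣ f) :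
    coeff (Finsupp.single (1 : Fin 2) 1) f = 0 := by
  refine (X_dvd_iff.mp h) _ ?_
  simp

private lemma coeff_X1_X1_mul (g : MvPowerSeries (Fin 2) ℂ) :
    coeff (Finsupp.single (1 : Fin 2) 1) (X 1 * g) = coeff 0 g := by
  have := coeff_add_monomial_mul (m := Finsupp.single (1 : Fin 2) 1) (n := 0) (φ := g) (1 : ℂ)
  simpa [X_def] using this

private lemma dvd_dvd {r : MvPowerSeries (Fin 2) ℂ}
    (h0 : (X 0 : MvPowerSeries (Fin 2) ℂ) ∣ r) (h1 : (X 1 : MvPowerSeries (Fin 2) ℂ) ∣ r) :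
    ∃ s : MvPowerSeries (Fin 2) ℂ, r = X 0 * X 1 * s := by
  obtain ⟨g, hg⟩ := h1
  have hX0g : (X 0 : MvPowerSeries (Fin 2) ℂ) ∣ g := by
    rw [X_dvd_iff]
    intro m hm
    have : coeff (Finsupp.single (1 : Fin 2) 1 + m) r = coeff m g := by
      rw [hg]
      have := coeff_add_monomial_mul (m := Finsupp.single (1 : Fin 2) 1) (n := m) (φ := g) (1 : ℂ)
      simpa [X_def] using this
    have h2 : coeff (Finsupp.single (1 : Fin 2) 1 + m) r = 0 := by
      refine (X_dvd_iff.mp h0) _ ?_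
      simp [hm]
    rw [← this, h2]
  obtain ⟨s, hs⟩ := hX0g
  exact ⟨s, by rw [hg, hs]; ring⟩

/-- In `R = ℂ + x·ℂ[[x,y]] ⊆ S = ℂ[[x,y]]` one has `(xyR :_R x) = xyS = (xyR :_R x²)`:
for `r ∈ R`, `rx ∈ xyR` iff `r ∈ xyS` iff `rx² ∈ xyR`.  In particular the annihilator
chain of `x` modulo `xyR` stabilizes, so `x` is weakly proregular on `R/xyR`. -/
theorem stmt_18 (r : MvPowerSeries (Fin 2) ℂ) (hr : memR r) :
    ((∃ a, memR a ∧ r * X 0 = X 0 * X 1 * a) ↔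
        (∃ s : MvPowerSeries (Fin 2) ℂ, r = X 0 * X 1 * s)) ∧
    ((∃ a, memR a ∧ r * (X 0) ^ 2 = X 0 * X 1 * a) ↔
        (∃ s : MvPowerSeries (Fin 2) ℂ, r = X 0 * X 1 * s)) := by
  obtain ⟨c', g', hr'⟩ := hr
  constructor
  · constructor
    · rintro ⟨a, ⟨c, g, rfl⟩, heq⟩
      -- cancel X 0 : r = X 1 * C c + X 0 * (X 1 * g)
      have hcancel : r = X 1 * MvPowerSeries.C c + X 0 * (X 1 * g) := by
        apply mul_left_cancel₀ hX0_ne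
        rw [show X 0 * r = r * X 0 from mul_comm _ _, heq]; ring
      -- coefficient at y of r is 0 since r ∈ R
      have hcoeffr : coeff (Finsupp.single (1 : Fin 2) 1) r = 0 := by
        rw [hr']
        rw [map_add, coeff_X1_eq_zero_of_X0_dvd ⟨g', rfl⟩, add_zero, coeff_C]
        rw [if_neg]
        intro h
        have := congrFun (congrArg (fun f : Fin 2 →₀ ℕ => (f : Fin 2 → ℕ)) h) 1
        simp at this
      have hc : c = 0 := by
        have := congrArg (coeff (Finsupp.single (1 : Fin 2) 1)) hcancel
        rw [hcoeffr, map_add, coeff_X1_X1_mul,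
          coeff_X1_eq_zero_of_X0_dvd ⟨X 1 * g, rfl⟩] at this
        simpa using this.symm
      subst hc
      exact ⟨g, by rw [hcancel]; simp; ring⟩
    · rintro ⟨s, rfl⟩
      exact ⟨X 0 * s, ⟨0, s, by simp⟩, by ring⟩
  · constructor
    · rintro ⟨a, ⟨c, g, rfl⟩, heq⟩
      have hcancel : r * X 0 = X 1 * MvPowerSeries.C c + X 0 * (X 1 * g) := by
        apply mul_left_cancel₀ hX0_ne
        rw [show X 0 * (r * X 0) = r * X 0 ^ 2 from by ring, heq]; ring
      have hc : c = 0 := by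
        have := congrArg (coeff (Finsupp.single (1 : Fin 2) 1)) hcancel
        rw [coeff_X1_eq_zero_of_X0_dvd ⟨r, mul_comm r _⟩, map_add, coeff_X1_X1_mul,
          coeff_X1_eq_zero_of_X0_dvd ⟨X 1 * g, rfl⟩] at this
        simpa using this.symm
      subst hc
      have hry : r = X 1 * g := by
        apply mul_left_cancel₀ hX0_ne
        rw [show X 0 * r = r * X 0 from mul_comm _ _, hcancel]; simp
      -- constant coefficient of r is 0, so c' = 0 and X 0 ∣ r
      have hc' : c' = 0 := by
        have h0 : coeff (0 : Fin 2 →₀ ℕ) r = 0 := by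
          rw [hry]; exact coeff_zero_X_mul g 1
        rw [hr'] at h0
        simpa [coeff_zero_X_mul] using h0
      have hrx : (X 0 : MvPowerSeries (Fin 2) ℂ) ∣ r := ⟨g', by rw [hr', hc']; simp⟩
      exact dvd_dvd hrx ⟨g, hry⟩
    · rintro ⟨s, rfl⟩
      exact ⟨X 0 ^ 2 * s, ⟨0, X 0 * s, by simp; ring⟩, by ring⟩
end
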